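/- For every real q>1, every n≥1 and every x∈[0,∞), the fourth central moment of the q-Szász operator is M_{n,q}((t−x)^4;x) = x/[n]_q^3 + (q^2+3q−1)x^2/[n]_q^2 + (q−1)^2 x^3/[n]_q. -/

import Mathlib

open scoped BigOperators

/-- The `q`-integer `[k]_q = (q^k - 1)/(q - 1)`. -/
noncomputable def qNat (q : ℝ) (k : ℕ) : ℝ := (q ^ k - 1) / (q - 1)

/-- The `q`-factorial `[k]_q! = [1]_q [2]_q ⋯ [k]_q`, with `[0]_q! = 1`. -/
noncomputable def qFactorial (q : ℝ) : ℕ → ℝ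
  | 0 => 1
  | k + 1 => qFactorial q k * qNat q (k + 1)

/-- The `q`-exponential function `e_q(z) = ∑_{k=0}^∞ z^k/[k]_q!`. -/
noncomputable def qExp (q z : ℝ) : ℝ := ∑' k : ℕ, z ^ k / qFactorial q k

/-- The `q`-Szász basis function
`s_{n,k}(q;x) = q^{-k(k-1)/2} ([n]_q^k x^k/[k]_q!) e_q(-[n]_q q^{-k} x)`. -/
noncomputable def qSzaszBasis (q : ℝ) (n k : ℕ) (x : ℝ) : ℝ :=
  (q ^ (k * (k - 1) / 2))⁻¹ * (qNat q n ^ k * x ^ k / qFactorial q k) *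
    qExp q (-(qNat q n) * q ^ (-(k : ℤ)) * x)

/-- The `q`-Szász operator `M_{n,q}(f;x) = ∑_{k=0}^∞ f([k]_q/[n]_q) s_{n,k}(q;x)`. -/
noncomputable def qSzasz (q : ℝ) (n : ℕ) (f : ℝ → ℝ) (x : ℝ) : ℝ :=
  ∑' k : ℕ, f (qNat q k / qNat q n) * qSzaszBasis q n k x

/-- The weight `w_0(x) = 1`, `w_p(x) = (1 + x^p)⁻¹` for `p ≥ 1`. -/
noncomputable def weight (p : ℕ) (x : ℝ) : ℝ := if p = 0 then 1 else (1 + x ^ p)⁻¹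

/-- The weighted sup-norm `‖f‖_p = sup_{x ≥ 0} w_p(x)|f(x)|`. -/
noncomputable def wnorm (p : ℕ) (f : ℝ → ℝ) : ℝ :=
  ⨆ x : Set.Ici (0 : ℝ), weight p x.1 * |f x.1|

/-- Membership in the space `C_p`: `f` is continuous on `[0,∞)` and `w_p f` is
uniformly continuous and bounded on `[0,∞)`. -/
def MemCp (p : ℕ) (f : ℝ → ℝ) : Prop :=
  ContinuousOn f (Set.Ici 0) ∧
  UniformContinuousOn (fun x => weight p x * f x) (Set.Ici 0) ∧
  ∃ M : ℝ, ∀ x ∈ Set.Ici (0 : ℝ), |weight p x * f x| ≤ M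

/-- The second difference `Δ_h² f(x) = f(x+2h) - 2f(x+h) + f(x)`. -/
noncomputable def delta2 (f : ℝ → ℝ) (h x : ℝ) : ℝ := f (x + 2 * h) - 2 * f (x + h) + f x

/-- The second modulus of smoothness `ω_p²(f;δ) = sup_{0<h≤δ} ‖Δ_h² f‖_p`. -/
noncomputable def omega2 (p : ℕ) (f : ℝ → ℝ) (δ : ℝ) : ℝ :=
  ⨆ h : {h : ℝ // 0 < h ∧ h ≤ δ}, wnorm p (fun x => delta2 f h.1 x)

/-- The (first) modulus of continuity on `[0,∞)`:
`ω(g;δ) = sup {|g(s)-g(t)| : s,t ≥ 0, |s-t| ≤ δ}`. -/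
noncomputable def omega1 (g : ℝ → ℝ) (δ : ℝ) : ℝ :=
  sSup {d : ℝ | ∃ s t : ℝ, 0 ≤ s ∧ 0 ≤ t ∧ |s - t| ≤ δ ∧ d = |g s - g t|}

/-- The `q`-derivative `(D_q g)(x) = (g(qx) - g(x))/((q-1)x)`. -/
noncomputable def qDeriv (q : ℝ) (g : ℝ → ℝ) (x : ℝ) : ℝ := (g (q * x) - g x) / ((q - 1) * x)

/-- The `q`-Stirling-type numbers: `S_q(0,0)=1`, `S_q(m,0)=0` for `m>0`,
`S_q(m,j)=0` for `m<j`, and `S_q(m+1,j)=[j]_q S_q(m,j) + S_q(m,j-1)`. -/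
noncomputable def qStirling (q : ℝ) : ℕ → ℕ → ℝ
  | 0, 0 => 1
  | 0, _ + 1 => 0
  | _ + 1, 0 => 0
  | m + 1, j + 1 => qNat q (j + 1) * qStirling q m (j + 1) + qStirling q m j

section QSzaszAux
variable {q : ℝ}

lemma qNat_pos (hq : 1 < q) {k : ℕ} (hk : 1 ≤ k) : 0 < qNat q k := by
  have h1 : (1:ℝ) < q ^ k := one_lt_pow₀ hq (by omega)
  exact div_pos (by linarith) (by linarith)

lemma qFactorial_pos (hq : 1 < q) (k : ℕ) : 0 < qFactorial q k := by
  induction k with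
  | zero => norm_num [qFactorial]
  | succ k ih => exact mul_pos ih (qNat_pos hq k.succ_pos)

lemma qNat_ge (hq : 1 < q) (k : ℕ) : q ^ k ≤ qNat q (k+1) := by
  rw [qNat, le_div_iff₀ (by linarith)]
  have : q ^ k * q = q ^ (k+1) := (pow_succ q k).symm
  nlinarith [one_le_pow₀ hq.le (n := k)]

lemma two_dvd_tri (k : ℕ) : 2 ∣ k*(k-1) := by
  rcases Nat.even_or_odd k with h | h
  · exact Dvd.dvd.mul_right h.two_dvd _
  · obtain ⟨m, hm⟩ := h
    exact Dvd.dvd.mul_left ⟨m, by omega⟩ _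

lemma tri_exact (k : ℕ) : 2 * (k*(k-1)/2) = k*(k-1) :=
  Nat.mul_div_cancel' (two_dvd_tri k)

lemma tri_succ (k : ℕ) : (k+1)*k/2 = k*(k-1)/2 + k := by
  have h1 : (k+1)*k = k*(k-1)+2*k := by
    cases k with
    | zero => simp
    | succ m => simp [Nat.succ_sub_one]; ring
  have h2 := tri_exact k
  have h3 := tri_exact (k+1)
  rw [Nat.add_sub_cancel] at h3
  omega

lemma tri_add (k d : ℕ) : (k+d)*((k+d)-1)/2 = k*(k-1)/2 + d*(d-1)/2 + k*d := by
  have h1 : (k+d)*((k+d)-1) = k*(k-1) + d*(d-1) + 2*(k*d) := by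
    cases k with
    | zero => simp
    | succ m =>
      cases d with
      | zero => simp
      | succ p => simp [Nat.succ_sub_one]; ring
  have h2 := tri_exact k
  have h3 := tri_exact d
  have h4 := tri_exact (k+d)
  rw [show (k+d)*((k+d)-1) = (k+d)*(k+d-1) from rfl] at h4
  omega

lemma summable_qExp (hq : 1 < q) (z : ℝ) : Summable (fun j : ℕ => z ^ j / qFactorial q j) := by
  apply summable_of_ratio_norm_eventually_le (r := 1/2) (by norm_num)
  have h : Filter.Tendsto (fun k : ℕ => q ^ k) Filter.atTop Filter.atTop :=
    tendsto_pow_atTop_atTop_of_one_lt hq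
  filter_upwards [h.eventually_ge_atTop (2 * |z|)] with j hj
  have hF := qFactorial_pos hq j
  have hN : 0 < qNat q (j+1) := qNat_pos hq j.succ_pos
  have key : ‖z ^ (j+1) / qFactorial q (j+1)‖ = |z| / qNat q (j+1) * ‖z ^ j / qFactorial q j‖ := by
    simp only [Real.norm_eq_abs]
    rw [qFactorial, pow_succ, abs_div, abs_div, abs_mul, abs_mul, abs_of_pos hF, abs_of_pos hN]
    field_simp
  rw [key]
  have h2 : 2 * |z| ≤ qNat q (j+1) := le_trans hj (qNat_ge hq j)
  have : |z| / qNat q (j+1) ≤ 1/2 := by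
    rw [div_le_iff₀ hN]; linarith
  have hnn : (0:ℝ) ≤ ‖z ^ j / qFactorial q j‖ := norm_nonneg _
  nlinarith

lemma qNat_decomp (hq : 1 < q) {k m : ℕ} (h : k ≤ m) :
    qNat q m = qNat q k + q ^ k * qNat q (m - k) := by
  have hp : q ^ k * q ^ (m-k) = q ^ m := by rw [← pow_add]; congr 1; omega
  have h1 : q - 1 ≠ 0 := by intro h'; linarith [sub_eq_zero.mp h']
  unfold qNat
  field_simp
  linarith [hp]

lemma qbt (hq : 1 < q) : ∀ (N : ℕ) (z : ℝ),
    ∑ k ∈ Finset.range (N+1),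
        (-1:ℝ)^k * q^(k*(k-1)/2) * z^k / (qFactorial q k * qFactorial q (N-k))
      = (∏ i ∈ Finset.range N, (1 - q^i * z)) / qFactorial q N := by
  intro N
  induction N with
  | zero => intro z; simp [qFactorial]
  | succ N ih =>
    intro z
    have hFpos : ∀ m, (0:ℝ) < qFactorial q m := qFactorial_pos hq
    have hFne : ∀ m, qFactorial q m ≠ 0 := fun m => (hFpos m).ne'
    have hNpos : 0 < qNat q (N+1) := qNat_pos hq N.succ_pos
    have h0 : qNat q 0 = 0 := by simp [qNat]
    have key : qNat q (N+1) * (∑ k ∈ Finset.range (N+2),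
          (-1:ℝ)^k * q^(k*(k-1)/2) * z^k / (qFactorial q k * qFactorial q (N+1-k)))
        = (1 - z) * ((∏ i ∈ Finset.range N, (1 - q^i * (q*z))) / qFactorial q N) := by
      rw [Finset.mul_sum]
      have hsplit : ∀ k ∈ Finset.range (N+2),
          qNat q (N+1) * ((-1:ℝ)^k * q^(k*(k-1)/2) * z^k / (qFactorial q k * qFactorial q (N+1-k)))
            = ((-1:ℝ)^k * q^(k*(k-1)/2) * z^k * qNat q k / (qFactorial q k * qFactorial q (N+1-k)))
              + ((-1:ℝ)^k * q^(k*(k-1)/2) * z^k * q^k * qNat q (N+1-k) /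
                  (qFactorial q k * qFactorial q (N+1-k))) := by
        intro k hk
        have hk' : k ≤ N+1 := by simp [Finset.mem_range] at hk; omega
        rw [qNat_decomp hq hk']
        ring
      rw [Finset.sum_congr rfl hsplit, Finset.sum_add_distrib]
      have hA : ∑ k ∈ Finset.range (N+2),
            ((-1:ℝ)^k * q^(k*(k-1)/2) * z^k * qNat q k / (qFactorial q k * qFactorial q (N+1-k)))
          = -z * ∑ k ∈ Finset.range (N+1),
              (-1:ℝ)^k * q^(k*(k-1)/2) * (q*z)^k / (qFactorial q k * qFactorial q (N-k)) := by
        rw [Finset.sum_range_succ']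
        simp only [h0, mul_zero, zero_div, add_zero]
        rw [Finset.mul_sum]
        refine Finset.sum_congr rfl fun i hi => ?_
        have hsub : N + 1 - (i+1) = N - i := by omega
        have htri : (i+1)*((i+1)-1)/2 = i*(i-1)/2 + i := by simpa using tri_succ i
        rw [hsub, htri, show qFactorial q (i+1) = qFactorial q i * qNat q (i+1) from rfl]
        have hne : qNat q (i+1) ≠ 0 := (qNat_pos hq i.succ_pos).ne'
        have hne' : qNat q (1+i) ≠ 0 := by rwa [add_comm]
        have hFi := (qFactorial_pos hq i).ne'
        have hFNi := (qFactorial_pos hq (N-i)).ne'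
        field_simp
        ring
      have hB : ∑ k ∈ Finset.range (N+2),
            ((-1:ℝ)^k * q^(k*(k-1)/2) * z^k * q^k * qNat q (N+1-k) /
              (qFactorial q k * qFactorial q (N+1-k)))
          = ∑ k ∈ Finset.range (N+1),
              (-1:ℝ)^k * q^(k*(k-1)/2) * (q*z)^k / (qFactorial q k * qFactorial q (N-k)) := by
        rw [Finset.sum_range_succ]
        simp only [show N+1-(N+1) = 0 from by omega, h0, mul_zero, zero_div, add_zero]
        refine Finset.sum_congr rfl fun k hk => ?_
        have hk' : k ≤ N := by simp [Finset.mem_range] at hk; omega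
        have hsub : N + 1 - k = (N - k) + 1 := by omega
        rw [hsub, show qFactorial q ((N-k)+1) = qFactorial q (N-k) * qNat q ((N-k)+1) from rfl]
        have hne : qNat q ((N-k)+1) ≠ 0 := (qNat_pos hq (N-k).succ_pos).ne'
        have hFk := (qFactorial_pos hq k).ne'
        have hFNk := (qFactorial_pos hq (N-k)).ne'
        field_simp
        ring
      rw [hA, hB, ih (q*z)]
      ring
    have hprod : ∏ i ∈ Finset.range (N+1), (1 - q^i * z)
        = (1 - z) * ∏ i ∈ Finset.range N, (1 - q^i * (q*z)) := by
      rw [Finset.prod_range_succ']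
      simp only [pow_zero, one_mul]
      rw [mul_comm]
      congr 1
      exact Finset.prod_congr rfl fun i _ => by rw [pow_succ]; ring
    apply mul_left_cancel₀ hNpos.ne'
    have hFneN : qFactorial q N ≠ 0 := hFne N
    have hfin : qNat q (N+1) * ((∏ i ∈ Finset.range (N+1), (1 - q^i * z)) / qFactorial q (N+1))
        = (1 - z) * ((∏ i ∈ Finset.range N, (1 - q^i * (q*z))) / qFactorial q N) := by
      rw [hprod, show qFactorial q (N+1) = qFactorial q N * qNat q (N+1) from rfl]
      field_simp
      ring
    rw [key, hfin]

lemma term_eq (hq : 1 < q) (r j d : ℕ) (a : ℝ) :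
    (q^r)^d * ((q^(d*(d-1)/2))⁻¹ * (a^d / qFactorial q d) * ((-a * (q^d)⁻¹)^j / qFactorial q j))
      = (q^r)^(j+d) * (q^((j+d)*((j+d)-1)/2))⁻¹ * a^(j+d) *
        ((-1:ℝ)^j * q^(j*(j-1)/2) * ((q^r)⁻¹)^j / (qFactorial q j * qFactorial q d)) := by
  have hq0 : q ≠ 0 := by positivity
  have hFj := (qFactorial_pos hq j).ne'
  have hFd := (qFactorial_pos hq d).ne'
  rw [tri_add j d]
  rw [show (-a * (q^d)⁻¹)^j = (-1:ℝ)^j * a^j * (q^(d*j))⁻¹ by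
        rw [mul_pow, inv_pow, ← pow_mul, neg_pow]]
  rw [inv_pow (q^r) j]
  field_simp
  ring

/-- The double-sum term. -/
noncomputable def Tm (q : ℝ) (r : ℕ) (a : ℝ) (p : ℕ × ℕ) : ℝ :=
  (q^r)^p.1 * ((q^(p.1*(p.1-1)/2))⁻¹ * (a^p.1 / qFactorial q p.1) *
    ((-a * (q^p.1)⁻¹)^p.2 / qFactorial q p.2))

lemma summable_Tm (hq : 1 < q) (r : ℕ) (a : ℝ) : Summable (Tm q r a) := by
  have hq0 : (0:ℝ) < q := by linarith
  set g : ℕ → ℝ := fun k => (q^r)^k * (q^(k*(k-1)/2))⁻¹ * |a|^k / qFactorial q k with hg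
  set h : ℕ → ℝ := fun j => |a|^j / qFactorial q j with hh
  have hgnn : ∀ k, 0 ≤ g k := fun k => by
    have := qFactorial_pos hq k; positivity
  have hhnn : ∀ j, 0 ≤ h j := fun j => by
    have := qFactorial_pos hq j; positivity
  have hgsum : Summable g := by
    apply summable_of_ratio_norm_eventually_le (r := 1/2) (by norm_num)
    have ht : Filter.Tendsto (fun k : ℕ => q ^ k) Filter.atTop Filter.atTop :=
      tendsto_pow_atTop_atTop_of_one_lt hq
    filter_upwards [ht.eventually_ge_atTop (2 * (q^r * |a|))] with k hk
    have hFk := qFactorial_pos hq k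
    have hNk : 0 < qNat q (k+1) := qNat_pos hq k.succ_pos
    have h1 : (1:ℝ) ≤ qNat q (k+1) := le_trans (one_le_pow₀ hq.le) (qNat_ge hq k)
    have e1 : (k+1)*(k+1-1)/2 = k*(k-1)/2 + k := by simpa using tri_succ k
    have hq0' : q ≠ 0 := hq0.ne'
    have hkey : g (k+1) = g k * (q^r * |a|) / (q^k * qNat q (k+1)) := by
      rw [hg]
      simp only []
      rw [e1, show qFactorial q (k+1) = qFactorial q k * qNat q (k+1) from rfl, pow_add,
        pow_succ, pow_succ]
      field_simp
      ring
    rw [hkey, mul_div_assoc]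
    have hre : (q^r * |a|) / (q^k * qNat q (k+1)) ≤ 1/2 := by
      rw [div_le_iff₀ (by positivity)]
      nlinarith [pow_pos hq0 k, abs_nonneg a, pow_pos hq0 r]
    have h2 : (0:ℝ) ≤ (q^r * |a|) / (q^k * qNat q (k+1)) := by positivity
    simp only [Real.norm_eq_abs]
    rw [abs_of_nonneg (hgnn k), abs_of_nonneg (mul_nonneg (hgnn k) h2)]
    nlinarith [mul_le_mul_of_nonneg_left hre (hgnn k)]
  have hij : Summable (fun p : ℕ × ℕ => g p.1 * h p.2) :=
    hgsum.mul_of_nonneg (by rw [hh]; exact summable_qExp hq |a|) hgnn hhnn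
  rw [← summable_abs_iff]
  apply Summable.of_nonneg_of_le (fun p => abs_nonneg _) _ hij
  intro p
  obtain ⟨k, j⟩ := p
  have hFk := qFactorial_pos hq k
  have hFj := qFactorial_pos hq j
  have hqk : (0:ℝ) < q ^ k := by positivity
  have hqt : (0:ℝ) < q ^ (k*(k-1)/2) := by positivity
  have hb : |Tm q r a (k, j)| = g k * (h j * ((q^k)⁻¹)^j) := by
    rw [hg, hh]
    simp only [Tm, abs_mul, abs_div, abs_pow, abs_inv, abs_neg, abs_of_pos hq0,
      abs_of_pos hFk, abs_of_pos hFj]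
    ring
  rw [hb]
  have hle : ((q^k)⁻¹)^j ≤ 1 := by
    apply pow_le_one₀ (by positivity)
    rw [inv_le_one_iff₀]
    right; exact one_le_pow₀ hq.le
  have := hhnn j
  nlinarith [hgnn k, mul_le_mul_of_nonneg_left hle (hhnn j)]
lemma row_eq (hq : 1 < q) (r : ℕ) (a : ℝ) (N : ℕ) :
    ∑ k ∈ Finset.range (N+1), Tm q r a (k, N-k)
      = (q^r)^N * (q^(N*(N-1)/2))⁻¹ * (∏ i ∈ Finset.range N, (1 - q^i / q^r)) * a^N /
          qFactorial q N := by
  have hq0 : q ≠ 0 := by positivity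
  rw [← Finset.sum_range_reflect]
  have step : ∀ j ∈ Finset.range (N+1),
      Tm q r a (N+1-1-j, N-(N+1-1-j))
        = ((q^r)^N * (q^(N*(N-1)/2))⁻¹ * a^N) *
            ((-1:ℝ)^j * q^(j*(j-1)/2) * ((q^r)⁻¹)^j /
              (qFactorial q j * qFactorial q (N-j))) := by
    intro j hj
    have hjN : j ≤ N := by simp [Finset.mem_range] at hj; omega
    have h1 : N+1-1-j = N-j := by omega
    have h2 : N-(N-j) = j := by omega
    rw [h1, h2]
    have := term_eq hq r j (N-j) a
    rw [show j + (N-j) = N from by omega] at this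
    rw [show Tm q r a (N-j, j) = (q^r)^(N-j) * ((q^((N-j)*((N-j)-1)/2))⁻¹ *
        (a^(N-j) / qFactorial q (N-j)) * ((-a * (q^(N-j))⁻¹)^j / qFactorial q j)) from rfl]
    rw [this]
  rw [Finset.sum_congr rfl step, ← Finset.mul_sum]
  have := qbt hq N ((q^r)⁻¹)
  rw [this]
  have hprod : ∀ i, (1 - q^i * (q^r)⁻¹) = (1 - q^i / q^r) := fun i => by
    rw [div_eq_mul_inv]
  rw [Finset.prod_congr rfl (fun i _ => hprod i)]
  ring

lemma phi_summable (hq : 1 < q) (r : ℕ) (a : ℝ) :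
    Summable (fun k : ℕ => (q^r)^k * ((q^(k*(k-1)/2))⁻¹ * (a^k / qFactorial q k) *
      qExp q (-a * (q^k)⁻¹))) := by
  have hT := summable_Tm hq r a
  have hrow : ∀ k : ℕ, ∑' j : ℕ, Tm q r a (k, j)
      = (q^r)^k * ((q^(k*(k-1)/2))⁻¹ * (a^k / qFactorial q k) * qExp q (-a * (q^k)⁻¹)) := by
    intro k
    rw [qExp, ← tsum_mul_left, ← tsum_mul_left]
    exact tsum_congr fun j => by simp only [Tm]
  have := hT.prod
  exact this.congr hrow

lemma phi (hq : 1 < q) (r : ℕ) (a : ℝ) :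
    ∑' k : ℕ, (q^r)^k * ((q^(k*(k-1)/2))⁻¹ * (a^k / qFactorial q k) * qExp q (-a * (q^k)⁻¹))
      = ∑ N ∈ Finset.range (r+1), (q^r)^N * (q^(N*(N-1)/2))⁻¹ *
          (∏ i ∈ Finset.range N, (1 - q^i / q^r)) * a^N / qFactorial q N := by
  have hq0 : q ≠ 0 := by positivity
  have hT := summable_Tm hq r a
  have hrow : ∀ k : ℕ, ∑' j : ℕ, Tm q r a (k, j)
      = (q^r)^k * ((q^(k*(k-1)/2))⁻¹ * (a^k / qFactorial q k) * qExp q (-a * (q^k)⁻¹)) := by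
    intro k
    rw [qExp, ← tsum_mul_left, ← tsum_mul_left]
    exact tsum_congr fun j => by simp only [Tm]
  calc ∑' k : ℕ, (q^r)^k * ((q^(k*(k-1)/2))⁻¹ * (a^k / qFactorial q k) * qExp q (-a * (q^k)⁻¹))
      = ∑' k : ℕ, ∑' j : ℕ, Tm q r a (k, j) := (tsum_congr hrow).symm
    _ = ∑' p : ℕ × ℕ, Tm q r a p := (hT.tsum_prod).symm
    _ = ∑' σ : (Σ n : ℕ, Finset.HasAntidiagonal.antidiagonal n), Tm q r a σ.2 := by
        rw [← Finset.HasAntidiagonal.sigmaAntidiagonalEquivProd.tsum_eq (Tm q r a)]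
        rfl
    _ = ∑' n : ℕ, ∑' p : (Finset.HasAntidiagonal.antidiagonal n : Finset (ℕ × ℕ)), Tm q r a p := by
        apply Summable.tsum_sigma
        exact (Finset.HasAntidiagonal.sigmaAntidiagonalEquivProd.summable_iff).mpr hT
    _ = ∑' n : ℕ, ∑ p ∈ Finset.HasAntidiagonal.antidiagonal n, Tm q r a p :=
        tsum_congr fun n => Finset.tsum_subtype _ _
    _ = ∑' n : ℕ, ((q^r)^n * (q^(n*(n-1)/2))⁻¹ *
          (∏ i ∈ Finset.range n, (1 - q^i / q^r)) * a^n / qFactorial q n) := by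
        refine tsum_congr fun n => ?_
        rw [Finset.Nat.sum_antidiagonal_eq_sum_range_succ_mk]
        exact row_eq hq r a n
    _ = ∑ N ∈ Finset.range (r+1), (q^r)^N * (q^(N*(N-1)/2))⁻¹ *
          (∏ i ∈ Finset.range N, (1 - q^i / q^r)) * a^N / qFactorial q N := by
        apply tsum_eq_sum
        intro N hN
        have hrN : r < N := by simp [Finset.mem_range] at hN; omega
        have : ∏ i ∈ Finset.range N, (1 - q^i / q^r) = 0 := by
          apply Finset.prod_eq_zero (Finset.mem_range.mpr hrN)
          rw [div_self (by positivity)]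
          ring
        rw [this]
        ring

end QSzaszAux

set_option maxHeartbeats 1000000 in
/-- fourth central moment
`M_{n,q}((t-x)⁴;x) = x/[n]_q³ + (q²+3q-1)x²/[n]_q² + (q-1)²x³/[n]_q`. -/
theorem qSzasz_central_moment_four (q : ℝ) (hq : 1 < q) (n : ℕ) (hn : 1 ≤ n)
    (x : ℝ) (hx : 0 ≤ x) :
    qSzasz q n (fun t => (t - x) ^ 4) x =
      x / qNat q n ^ 3 + (q ^ 2 + 3 * q - 1) * x ^ 2 / qNat q n ^ 2 +
        (q - 1) ^ 2 * x ^ 3 / qNat q n := by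
  have hq0 : (0:ℝ) < q := by linarith
  have hq1 : q - 1 ≠ 0 := by intro h; nlinarith [sub_eq_zero.mp h]
  have hA : 0 < qNat q n := qNat_pos hq hn
  set a : ℝ := qNat q n * x with ha
  set b : ℝ := 1 + (q-1) * a with hb
  set C : ℕ → ℝ := fun r => (Nat.choose 4 r : ℝ) * (-b)^(4-r) * ((q-1) * qNat q n)⁻¹^4
    with hC
  set v : ℕ → ℝ := fun k => (q^(k*(k-1)/2))⁻¹ * (a^k / qFactorial q k) *
    qExp q (-a * (q^k)⁻¹) with hv
  have hbasis : ∀ k : ℕ, qSzaszBasis q n k x = v k := by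
    intro k
    unfold qSzaszBasis
    have harg : -(qNat q n) * q ^ (-(k:ℤ)) * x = -a * (q^k)⁻¹ := by
      rw [zpow_neg, zpow_natCast]; ring
    rw [harg, ← mul_pow, hv]
  have hfk : ∀ k : ℕ, ((qNat q k / qNat q n - x)^4 : ℝ)
      = ∑ r ∈ Finset.range 5, C r * (q^r)^k := by
    intro k
    have hAne : qNat q n ≠ 0 := hA.ne'
    have e1 : qNat q k / qNat q n - x = (q^k + (-b)) * ((q-1) * qNat q n)⁻¹ := by
      rw [show qNat q k = (q^k-1)/(q-1) from rfl, hb, ha]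
      field_simp
      ring
    rw [e1, mul_pow, add_pow, Finset.sum_mul]
    refine Finset.sum_congr rfl fun r _ => ?_
    simp only [hC]
    rw [pow_right_comm]
    ring
  have hsum : ∀ r ∈ Finset.range 5, Summable (fun k : ℕ => C r * ((q^r)^k * v k)) :=
    fun r _ => (phi_summable hq r a).mul_left _
  unfold qSzasz
  calc ∑' k : ℕ, (fun t => (t - x)^4) (qNat q k / qNat q n) * qSzaszBasis q n k x
      = ∑' k : ℕ, ∑ r ∈ Finset.range 5, C r * ((q^r)^k * v k) := by
        refine tsum_congr fun k => ?_
        simp only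
        rw [hbasis k, hfk k, Finset.sum_mul]
        exact Finset.sum_congr rfl fun r _ => by ring
    _ = ∑ r ∈ Finset.range 5, ∑' k : ℕ, C r * ((q^r)^k * v k) := Summable.tsum_finsetSum hsum
    _ = ∑ r ∈ Finset.range 5, C r * ∑' k : ℕ, (q^r)^k * v k :=
        Finset.sum_congr rfl fun r _ => tsum_mul_left
    _ = ∑ r ∈ Finset.range 5, C r * ∑ N ∈ Finset.range (r+1), (q^r)^N * (q^(N*(N-1)/2))⁻¹ *
          (∏ i ∈ Finset.range N, (1 - q^i / q^r)) * a^N / qFactorial q N := by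
        refine Finset.sum_congr rfl fun r _ => ?_
        rw [hv]
        rw [phi hq r a]
    _ = x / qNat q n ^ 3 + (q ^ 2 + 3 * q - 1) * x ^ 2 / qNat q n ^ 2 +
        (q - 1) ^ 2 * x ^ 3 / qNat q n := by
        simp only [hC, Finset.sum_range_succ, Finset.sum_range_zero, Finset.prod_range_succ,
          Finset.prod_range_zero, qFactorial, hb, ha]
        rw [show qNat q 1 = (q^1-1)/(q-1) from rfl, show qNat q 2 = (q^2-1)/(q-1) from rfl,
          show qNat q 3 = (q^3-1)/(q-1) from rfl, show qNat q 4 = (q^4-1)/(q-1) from rfl,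
          show ((Nat.choose 4 0:ℕ):ℝ) = 1 from by norm_num [Nat.choose],
          show ((Nat.choose 4 1:ℕ):ℝ) = 4 from by norm_num [Nat.choose],
          show ((Nat.choose 4 2:ℕ):ℝ) = 6 from by norm_num [Nat.choose],
          show ((Nat.choose 4 3:ℕ):ℝ) = 4 from by norm_num [Nat.choose],
          show ((Nat.choose 4 4:ℕ):ℝ) = 1 from by norm_num [Nat.choose]]
        norm_num
        have hqne : q ≠ 0 := hq0.ne'
        have h2 : q^2 - 1 ≠ 0 := ne_of_gt (by nlinarith)
        have h3 : q^3 - 1 ≠ 0 := ne_of_gt (by nlinarith [sq_nonneg q, sq_nonneg (q-1)])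
        have h4 : q^4 - 1 ≠ 0 := ne_of_gt (by nlinarith [sq_nonneg q, sq_nonneg (q^2), sq_nonneg (q^2-1)])
        have hAne : qNat q n ≠ 0 := hA.ne'
        field_simp
        ring
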